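/- Under the same setup, if instead p < (q(1−2ε) − 4c(ε−δ))/(1+2ε), then for all sufficiently large n, P(voter i ∈ H₁ predicts a₂) ≥ 1 − 2·exp(−2√(n−1)). -/

import Mathlib

open MeasureTheory ProbabilityTheory


lemma hoeffding_scalar (p : ℝ) (hp0 : 0 < p) (hp1 : p < 1) (x : ℝ) :
    1 - p + p * Real.exp x ≤ Real.exp (p * x + x ^ 2 / 8) := by
  set h : ℝ → ℝ := fun y => 1 - p + p * Real.exp y with hh_def
  have hh : ∀ y, 0 < h y := fun y => by
    have := Real.exp_pos y
    simp only [hh_def]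
    nlinarith
  have dh : ∀ y, HasDerivAt h (p * Real.exp y) y := fun y => by
    exact ((Real.hasDerivAt_exp y).const_mul p).const_add (1 - p)
  set g1 : ℝ → ℝ := fun y => p + y / 4 - p * Real.exp y / h y with hg1_def
  have dg1 : ∀ y, HasDerivAt g1 (1 / 4 - (1 - p) * (p * Real.exp y) / (h y) ^ 2) y := by
    intro y
    have hdiv : HasDerivAt (fun z => p * Real.exp z / h z)
        ((p * Real.exp y * h y - p * Real.exp y * (p * Real.exp y)) / (h y) ^ 2) y :=
      ((Real.hasDerivAt_exp y).const_mul p).div (dh y) (hh y).ne'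
    have := (((hasDerivAt_id y).div_const 4).const_add p).sub hdiv
    refine this.congr_deriv ?_
    have h0 : h y ≠ 0 := (hh y).ne'
    field_simp [hh_def]
    rw [show h y = 1 - p + p * Real.exp y from rfl]
    ring
  have dg1_nonneg : ∀ y, 0 ≤ 1 / 4 - (1 - p) * (p * Real.exp y) / (h y) ^ 2 := by
    intro y
    rw [sub_nonneg, div_le_iff₀ (pow_pos (hh y) 2)]
    have : h y = (1 - p) + p * Real.exp y := rfl
    nlinarith [sq_nonneg ((1 - p) - p * Real.exp y), Real.exp_pos y]
  have g1mono : Monotone g1 :=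
    monotone_of_deriv_nonneg (fun y => (dg1 y).differentiableAt)
      (fun y => by rw [(dg1 y).deriv]; exact dg1_nonneg y)
  have g10 : g1 0 = 0 := by
    simp only [hg1_def, hh_def]
    field_simp
    simp
  set g : ℝ → ℝ := fun y => p * y + y ^ 2 / 8 - Real.log (h y) with hg_def
  have dg : ∀ y, HasDerivAt g (g1 y) y := by
    intro y
    have hlog : HasDerivAt (fun z => Real.log (h z)) (p * Real.exp y / h y) y := by
      simpa using (dh y).log (hh y).ne'
    have := (((hasDerivAt_id y).const_mul p).add
      (((hasDerivAt_id y).pow 2).div_const 8)).sub hlog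
    refine this.congr_deriv ?_
    simp only [hg1_def, id]
    ring
  have g0 : g 0 = 0 := by
    simp [hg_def, hh_def]
  have hg_nonneg : 0 ≤ g x := by
    rcases le_total 0 x with hx | hx
    · have mono : MonotoneOn g (Set.Ici 0) := by
        apply monotoneOn_of_deriv_nonneg (convex_Ici 0)
          (fun y _ => ((dg y).differentiableAt).continuousAt.continuousWithinAt)
          (fun y _ => ((dg y).differentiableAt).differentiableWithinAt)
        intro y hy
        rw [(dg y).deriv]
        rw [interior_Ici] at hy
        calc (0:ℝ) = g1 0 := g10.symm
          _ ≤ g1 y := g1mono (le_of_lt hy)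
      have := mono Set.self_mem_Ici (Set.mem_Ici.2 hx) hx
      rwa [g0] at this
    · have anti : AntitoneOn g (Set.Iic 0) := by
        apply antitoneOn_of_deriv_nonpos (convex_Iic 0)
          (fun y _ => ((dg y).differentiableAt).continuousAt.continuousWithinAt)
          (fun y _ => ((dg y).differentiableAt).differentiableWithinAt)
        intro y hy
        rw [(dg y).deriv]
        rw [interior_Iic] at hy
        calc g1 y ≤ g1 0 := g1mono (le_of_lt hy)
          _ = 0 := g10
      have := anti (Set.mem_Iic.2 hx) Set.self_mem_Iic hx
      rwa [g0] at this
    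
  have hlog_le : Real.log (h x) ≤ p * x + x ^ 2 / 8 := by
    simp only [hg_def] at hg_nonneg; linarith
  calc h x = Real.exp (Real.log (h x)) := (Real.exp_log (hh x)).symm
    _ ≤ Real.exp (p * x + x ^ 2 / 8) := Real.exp_le_exp.2 hlog_le

lemma measure_preimage_nat {Ω : Type} [MeasurableSpace Ω] (μ : Measure Ω)
    (N : Ω → ℕ) (hN : Measurable N) (S : Set ℕ) :
    μ (N ⁻¹' S) = ∑' k : ℕ, S.indicator (fun k => μ {ω | N ω = k}) k := by
  classical
  have hU : N ⁻¹' S = ⋃ k : ℕ, if k ∈ S then N ⁻¹' {k} else ∅ := by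
    ext ω
    simp only [Set.mem_preimage, Set.mem_iUnion]
    constructor
    · intro hω; exact ⟨N ω, by simp [hω]⟩
    · rintro ⟨k, hk⟩
      by_cases h : k ∈ S
      · simp only [if_pos h] at hk
        simp only [Set.mem_preimage, Set.mem_singleton_iff] at hk
        rwa [hk]
      · simp [if_neg h] at hk
  rw [hU, measure_iUnion]
  · apply tsum_congr
    intro k
    by_cases h : k ∈ S
    · rw [if_pos h, Set.indicator_of_mem h]
      congr 1
    · rw [if_neg h, Set.indicator_of_notMem h, measure_empty]
  · intro i j hij
    simp only [Function.onFun]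
    by_cases hi : i ∈ S <;> by_cases hj : j ∈ S <;>
      simp only [hi, hj, if_true, if_false, Set.disjoint_empty,
        Set.empty_disjoint]
    rw [Set.disjoint_left]
    intro ω h1 h2
    simp only [Set.mem_preimage, Set.mem_singleton_iff] at h1 h2
    exact hij (h1 ▸ h2 ▸ rfl)
  · intro k
    by_cases h : k ∈ S
    · rw [if_pos h]; exact hN (measurableSet_singleton k)
    · rw [if_neg h]; exact MeasurableSet.empty

lemma chernoff_core (m : ℕ) (p : ℝ) (hp0 : 0 < p) (hp1 : p < 1) (lam a : ℝ)
    (S : Set ℕ) (hS : ∀ k : ℕ, k ∈ S → 0 ≤ lam * ((k : ℝ) - a))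
    {Ω : Type} [MeasurableSpace Ω] (μ : Measure Ω) (N : Ω → ℕ) (hN : Measurable N)
    (hpmf : ∀ k : ℕ, μ {ω | N ω = k} =
      ENNReal.ofReal (m.choose k * p ^ k * (1 - p) ^ (m - k))) :
    μ (N ⁻¹' S) ≤ ENNReal.ofReal (Real.exp (-lam * a + m * (lam * p + lam ^ 2 / 8))) := by
  have hp1' : (0:ℝ) ≤ 1 - p := by linarith
  set f : ℕ → ℝ := fun k => m.choose k * p ^ k * (1 - p) ^ (m - k) with hf_def
  have hf_nonneg : ∀ k, 0 ≤ f k := fun k => by positivity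
  set g : ℕ → ℝ := fun k => f k * Real.exp (lam * ((k : ℝ) - a)) with hg_def
  have hg_nonneg : ∀ k, 0 ≤ g k := fun k => by
    have := Real.exp_pos (lam * ((k:ℝ) - a)); have := hf_nonneg k; positivity
  rw [measure_preimage_nat μ N hN S]
  have step1 : ∑' k : ℕ, S.indicator (fun k => μ {ω | N ω = k}) k ≤
      ∑' k : ℕ, ENNReal.ofReal (g k) := by
    apply ENNReal.tsum_le_tsum
    intro k
    by_cases h : k ∈ S
    · rw [Set.indicator_of_mem h, hpmf k]
      apply ENNReal.ofReal_le_ofReal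
      have h1 : (1:ℝ) ≤ Real.exp (lam * ((k:ℝ) - a)) := by
        rw [show (1:ℝ) = Real.exp 0 from (Real.exp_zero).symm]
        exact Real.exp_le_exp.2 (hS k h)
      calc f k = f k * 1 := (mul_one _).symm
        _ ≤ g k := mul_le_mul_of_nonneg_left h1 (hf_nonneg k)
    · rw [Set.indicator_of_notMem h]; exact zero_le'
  have hvanish : ∀ k ∉ Finset.range (m + 1), ENNReal.ofReal (g k) = 0 := by
    intro k hk
    rw [Finset.mem_range, not_lt] at hk
    have : m.choose k = 0 := Nat.choose_eq_zero_of_lt (by omega)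
    simp [hg_def, hf_def, this]
  have step2 : ∑' k : ℕ, ENNReal.ofReal (g k) =
      ENNReal.ofReal (∑ k ∈ Finset.range (m + 1), g k) := by
    rw [tsum_eq_sum hvanish, ENNReal.ofReal_sum_of_nonneg (fun k _ => hg_nonneg k)]
  have step3 : ∑ k ∈ Finset.range (m + 1), g k ≤
      Real.exp (-lam * a + m * (lam * p + lam ^ 2 / 8)) := by
    have key : ∑ k ∈ Finset.range (m + 1), g k =
        Real.exp (-lam * a) * (p * Real.exp lam + (1 - p)) ^ m := by
      rw [add_pow, Finset.mul_sum]
      apply Finset.sum_congr rfl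
      intro k _
      simp only [hg_def, hf_def]
      rw [mul_sub, Real.exp_sub, mul_pow, ← Real.exp_nat_mul, neg_mul, Real.exp_neg,
        mul_comm lam ((k : ℝ))]
      ring
    rw [key]
    have hb : p * Real.exp lam + (1 - p) ≤ Real.exp (lam * p + lam ^ 2 / 8) := by
      have := hoeffding_scalar p hp0 hp1 lam
      have h2 : p * lam + lam ^ 2 / 8 = lam * p + lam ^ 2 / 8 := by ring
      rw [h2] at this
      linarith
    have hb0 : (0:ℝ) ≤ p * Real.exp lam + (1 - p) := by
      have := Real.exp_pos lam; nlinarith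
    calc Real.exp (-lam * a) * (p * Real.exp lam + (1 - p)) ^ m
        ≤ Real.exp (-lam * a) * Real.exp (lam * p + lam ^ 2 / 8) ^ m := by
          apply mul_le_mul_of_nonneg_left _ (Real.exp_pos _).le
          exact pow_le_pow_left₀ hb0 hb m
      _ = Real.exp (-lam * a + m * (lam * p + lam ^ 2 / 8)) := by
          rw [← Real.exp_nat_mul, ← Real.exp_add]
  calc ∑' k : ℕ, S.indicator (fun k => μ {ω | N ω = k}) k
      ≤ ∑' k : ℕ, ENNReal.ofReal (g k) := step1
    _ = ENNReal.ofReal (∑ k ∈ Finset.range (m + 1), g k) := step2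
    _ ≤ _ := ENNReal.ofReal_le_ofReal step3

lemma binom_tail_upper (m : ℕ) (hm : 0 < m) (p : ℝ) (hp0 : 0 < p) (hp1 : p < 1)
    (t : ℝ) (ht : 0 < t)
    {Ω : Type} [MeasurableSpace Ω] (μ : Measure Ω) (N : Ω → ℕ) (hN : Measurable N)
    (hpmf : ∀ k : ℕ, μ {ω | N ω = k} =
      ENNReal.ofReal (m.choose k * p ^ k * (1 - p) ^ (m - k))) :
    μ {ω | (m : ℝ) * p + t ≤ (N ω : ℝ)} ≤
      ENNReal.ofReal (Real.exp (-2 * t ^ 2 / m)) := by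
  have hm' : (0:ℝ) < m := Nat.cast_pos.2 hm
  set lam : ℝ := 4 * t / m with hlam
  set a : ℝ := (m : ℝ) * p + t with ha
  have hlam_pos : 0 < lam := by positivity
  have h := chernoff_core m p hp0 hp1 lam a {k : ℕ | a ≤ (k : ℝ)}
    (fun k hk => mul_nonneg hlam_pos.le (by simpa [sub_nonneg] using hk)) μ N hN hpmf
  have hset : N ⁻¹' {k : ℕ | a ≤ (k : ℝ)} = {ω | (m : ℝ) * p + t ≤ (N ω : ℝ)} := rfl
  rw [hset] at h
  refine h.trans (ENNReal.ofReal_le_ofReal (Real.exp_le_exp.2 (le_of_eq ?_)))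
  rw [hlam, ha]
  field_simp
  ring

lemma binom_tail_lower (m : ℕ) (hm : 0 < m) (p : ℝ) (hp0 : 0 < p) (hp1 : p < 1)
    (t : ℝ) (ht : 0 < t)
    {Ω : Type} [MeasurableSpace Ω] (μ : Measure Ω) (N : Ω → ℕ) (hN : Measurable N)
    (hpmf : ∀ k : ℕ, μ {ω | N ω = k} =
      ENNReal.ofReal (m.choose k * p ^ k * (1 - p) ^ (m - k))) :
    μ {ω | (N ω : ℝ) ≤ (m : ℝ) * p - t} ≤
      ENNReal.ofReal (Real.exp (-2 * t ^ 2 / m)) := by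
  have hm' : (0:ℝ) < m := Nat.cast_pos.2 hm
  set lam : ℝ := -(4 * t / m) with hlam
  set a : ℝ := (m : ℝ) * p - t with ha
  have hlam_neg : lam ≤ 0 := by
    rw [hlam]; rw [neg_nonpos]; positivity
  have h := chernoff_core m p hp0 hp1 lam a {k : ℕ | (k : ℝ) ≤ a}
    (fun k hk => mul_nonneg_of_nonpos_of_nonpos hlam_neg (by simpa [sub_nonpos] using hk))
    μ N hN hpmf
  have hset : N ⁻¹' {k : ℕ | (k : ℝ) ≤ a} = {ω | (N ω : ℝ) ≤ (m : ℝ) * p - t} := rfl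
  rw [hset] at h
  refine h.trans (ENNReal.ofReal_le_ofReal (Real.exp_le_exp.2 (le_of_eq ?_)))
  rw [hlam, ha]
  field_simp
  ring

set_option maxHeartbeats 1000000 in
/-- Influential media, majority voter, high-surprise case: if
p < (q(1−2ε) − 4c(ε−δ))/(1+2ε), then for all sufficiently large n, a majority voter
predicts a₂ with probability at least 1 − 2 exp(−2√(n−1)). -/
theorem majority_voter_surprised (ε c δ p q : ℝ)
    (hε : ε ∈ Set.Ioo (0:ℝ) (1/2)) (hc : 0 < c)
    (hp : p ∈ Set.Ioo (0:ℝ) 1) (hq : q ∈ Set.Ioo (0:ℝ) 1)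
    (hcond : p < (q * (1 - 2*ε) - 4*c*(ε - δ)) / (1 + 2*ε)) :
    ∃ n₀ : ℕ, 2 ≤ n₀ ∧ ∀ n : ℕ, n₀ ≤ n → ∀ m1 m2 : ℕ, 1 ≤ m1 →
      (m1 : ℝ) = n * (1/2 + ε) → (m2 : ℝ) = n * (1/2 - ε) →
      ∀ (Ω : Type) [MeasurableSpace Ω] (μ : Measure Ω), IsProbabilityMeasure μ →
      ∀ N1 N2 : Ω → ℕ, Measurable N1 → Measurable N2 →
      (∀ k : ℕ, μ {ω | N1 ω = k} =
        ENNReal.ofReal ((m1 - 1).choose k * p ^ k * (1 - p) ^ (m1 - 1 - k))) →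
      (∀ k : ℕ, μ {ω | N2 ω = k} =
        ENNReal.ofReal (m2.choose k * q ^ k * (1 - q) ^ (m2 - k))) →
      IndepFun N1 N2 μ →
      ENNReal.ofReal (1 - 2 * Real.exp (-2 * Real.sqrt ((n : ℝ) - 1))) ≤
        μ {ω | 2*c*(n : ℝ)*(ε - δ) + 1 ≤ (N2 ω : ℝ) - (N1 ω : ℝ)} := by
  obtain ⟨hε0, hε2⟩ := hε
  obtain ⟨hp0, hp1⟩ := hp
  obtain ⟨hq0, hq1⟩ := hq
  set Δ : ℝ := ((1 - 2*ε)*q - (1 + 2*ε)*p - 4*c*(ε - δ)) / 2 with hΔdef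
  have h2ε : (0:ℝ) < 1 + 2*ε := by linarith
  have hΔpos : 0 < Δ := by
    rw [lt_div_iff₀ h2ε] at hcond
    rw [hΔdef]
    nlinarith
  refine ⟨max 4 (⌈(3/Δ)^4⌉₊ + 1), le_trans (by norm_num) (le_max_left _ _), ?_⟩
  intro n hn m1 m2 hm1 hm1eq hm2eq Ω _ μ hμ N1 N2 hN1 hN2 hpmf1 hpmf2 _
  have hn4 : 4 ≤ n := le_trans (le_max_left _ _) hn
  have hnR4 : (4:ℝ) ≤ (n:ℝ) := by exact_mod_cast hn4
  have hnceil : (3/Δ)^4 ≤ (n:ℝ) := by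
    have h1 : ⌈(3/Δ)^4⌉₊ + 1 ≤ n := le_trans (le_max_right _ _) hn
    have h2 : (3/Δ)^4 ≤ (⌈(3/Δ)^4⌉₊ : ℝ) := Nat.le_ceil _
    have h3 : (⌈(3/Δ)^4⌉₊ : ℝ) ≤ (n:ℝ) := by exact_mod_cast le_of_lt (by omega)
    linarith
  set z : ℝ := (n:ℝ) - 1 with hz_def
  have hz3 : (3:ℝ) ≤ z := by rw [hz_def]; linarith
  have hz0 : (0:ℝ) < z := by linarith
  set t : ℝ := z ^ ((3:ℝ)/4) with ht_def
  have ht0 : 0 < t := Real.rpow_pos_of_pos hz0 _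
  -- basic m1, m2 facts
  have hm1R : (m1:ℝ) = n * (1/2 + ε) := hm1eq
  have hnε : (0:ℝ) < (n:ℝ) * ε := mul_pos (by linarith) hε0
  have hexp1 : (n:ℝ) * (1/2 + ε) = (n:ℝ)/2 + (n:ℝ)*ε := by ring
  have hexp2 : (n:ℝ) * (1/2 - ε) = (n:ℝ)/2 - (n:ℝ)*ε := by ring
  have hm1_gt2 : (2:ℝ) < (m1:ℝ) := by rw [hm1R, hexp1]; linarith
  have hm1_ge3 : 3 ≤ m1 := by
    have h2 : 2 < m1 := by exact_mod_cast hm1_gt2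
    omega
  have hc1 : ((m1 - 1 : ℕ) : ℝ) = (m1:ℝ) - 1 := by
    rw [Nat.cast_sub hm1]; norm_num
  have hm1sub_pos : 0 < m1 - 1 := by omega
  have hnε2 : (n:ℝ) * ε ≤ (n:ℝ) * (1/2) :=
    mul_le_mul_of_nonneg_left hε2.le (by linarith)
  have hm1_le : ((m1 - 1 : ℕ) : ℝ) ≤ z := by
    rw [hc1, hz_def, hm1R, hexp1]
    linarith
  have hm2_pos : 0 < m2 := by
    by_contra h
    push_neg at h
    interval_cases m2
    · rw [Nat.cast_zero] at hm2eq
      have : (0:ℝ) < (n:ℝ) * (1/2 - ε) := mul_pos (by linarith) (by linarith)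
      linarith
  have hm2_le : (m2:ℝ) ≤ z := by
    rw [hz_def, hm2eq, hexp2]; linarith
  -- tail bounds
  set A : Set Ω := {ω | ((m1 - 1 : ℕ) : ℝ) * p + t ≤ (N1 ω : ℝ)} with hA_def
  set B : Set Ω := {ω | (N2 ω : ℝ) ≤ (m2 : ℝ) * q - t} with hB_def
  have hbA := binom_tail_upper (m1 - 1) hm1sub_pos p hp0 hp1 t ht0 μ N1 hN1 hpmf1
  have hbB := binom_tail_lower m2 hm2_pos q hq0 hq1 t ht0 μ N2 hN2 hpmf2
  -- exp(-2 t^2 / m) ≤ exp(-2 √z) for 0 < m ≤ z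
  have ht2 : t ^ 2 = z * Real.sqrt z := by
    rw [ht_def, ← Real.rpow_natCast (z ^ ((3:ℝ)/4)) 2, ← Real.rpow_mul hz0.le]
    rw [show (3:ℝ)/4 * (2:ℕ) = 1 + 1/2 by push_cast; norm_num]
    rw [Real.rpow_add hz0, Real.rpow_one, Real.sqrt_eq_rpow]
  have hexp_bound : ∀ mm : ℝ, 0 < mm → mm ≤ z →
      Real.exp (-2 * t ^ 2 / mm) ≤ Real.exp (-2 * Real.sqrt z) := by
    intro mm hmm0 hmmz
    apply Real.exp_le_exp.2
    have hsz : 0 ≤ Real.sqrt z := Real.sqrt_nonneg z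
    have h1 : Real.sqrt z ≤ t ^ 2 / mm := by
      rw [le_div_iff₀ hmm0, ht2]
      have := mul_le_mul_of_nonneg_left hmmz hsz
      nlinarith
    have h2 : -2 * t ^ 2 / mm = -2 * (t ^ 2 / mm) := by ring
    rw [h2]; linarith
  set E : ℝ := Real.exp (-2 * Real.sqrt z) with hE_def
  have hE0 : 0 < E := Real.exp_pos _
  have hμA : μ A ≤ ENNReal.ofReal E := by
    refine hbA.trans (ENNReal.ofReal_le_ofReal ?_)
    have : (0:ℝ) < ((m1 - 1 : ℕ) : ℝ) := by exact_mod_cast hm1sub_pos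
    exact hexp_bound _ this hm1_le
  have hμB : μ B ≤ ENNReal.ofReal E := by
    refine hbB.trans (ENNReal.ofReal_le_ofReal ?_)
    have : (0:ℝ) < ((m2 : ℕ) : ℝ) := by exact_mod_cast hm2_pos
    exact hexp_bound _ this hm2_le
  -- margin inequality
  have hΔn : 2 * t + 1 ≤ Δ * (n:ℝ) := by
    have hn0 : (0:ℝ) < (n:ℝ) := by linarith
    have htn : t ≤ (n:ℝ) ^ ((3:ℝ)/4) := by
      rw [ht_def]
      exact Real.rpow_le_rpow hz0.le (by linarith) (by norm_num)
    have hn34_nonneg : (0:ℝ) ≤ (n:ℝ) ^ ((3:ℝ)/4) := Real.rpow_nonneg hn0.le _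
    have hn34_1 : (1:ℝ) ≤ (n:ℝ) ^ ((3:ℝ)/4) := by
      calc (1:ℝ) = (1:ℝ) ^ ((3:ℝ)/4) := (Real.one_rpow _).symm
        _ ≤ (n:ℝ) ^ ((3:ℝ)/4) := Real.rpow_le_rpow (by norm_num) (by linarith) (by norm_num)
    have hn14 : 3/Δ ≤ (n:ℝ) ^ ((1:ℝ)/4) := by
      have h0 : (0:ℝ) ≤ 3/Δ := by positivity
      have h := Real.rpow_le_rpow (by positivity : (0:ℝ) ≤ (3/Δ)^4) hnceil
        (by norm_num : (0:ℝ) ≤ 1/4)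
      rwa [← Real.rpow_natCast (3/Δ) 4, ← Real.rpow_mul h0,
        show ((4:ℕ):ℝ) * (1/4) = 1 by push_cast; norm_num, Real.rpow_one] at h
    have hΔ14 : 3 ≤ Δ * (n:ℝ) ^ ((1:ℝ)/4) := by
      have h := mul_le_mul_of_nonneg_left hn14 hΔpos.le
      have h3 : Δ * (3/Δ) = 3 := by field_simp
      rwa [h3] at h
    have hfinal : 3 * (n:ℝ) ^ ((3:ℝ)/4) ≤ Δ * (n:ℝ) := by
      calc 3 * (n:ℝ) ^ ((3:ℝ)/4) ≤ (Δ * (n:ℝ) ^ ((1:ℝ)/4)) * (n:ℝ) ^ ((3:ℝ)/4) :=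
            mul_le_mul_of_nonneg_right hΔ14 hn34_nonneg
        _ = Δ * ((n:ℝ) ^ ((1:ℝ)/4) * (n:ℝ) ^ ((3:ℝ)/4)) := by ring
        _ = Δ * (n:ℝ) := by
            rw [← Real.rpow_add hn0, show (1:ℝ)/4 + 3/4 = 1 by norm_num, Real.rpow_one]
    linarith
  have hmargin : 2*c*(n:ℝ)*(ε - δ) + 1 ≤
      (m2:ℝ) * q - (((m1 - 1 : ℕ):ℝ) * p + t) - t := by
    have expand : (m2:ℝ) * q - ((m1:ℝ) - 1) * p =
        Δ * (n:ℝ) + 2*c*(n:ℝ)*(ε - δ) + p := by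
      rw [hm1eq, hm2eq, hΔdef]; ring
    rw [hc1]
    nlinarith
  -- event inclusion
  set T : Set Ω := {ω | 2*c*(n : ℝ)*(ε - δ) + 1 ≤ (N2 ω : ℝ) - (N1 ω : ℝ)} with hT_def
  have hsub : (A ∪ B)ᶜ ⊆ T := by
    intro ω hω
    simp only [Set.mem_compl_iff, Set.mem_union, hA_def, hB_def, Set.mem_setOf_eq,
      not_or, not_le] at hω
    obtain ⟨h1, h2⟩ := hω
    simp only [hT_def, Set.mem_setOf_eq]
    linarith
  -- measurability of A ∪ B
  have hA_meas : MeasurableSet A := by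
    have : A = N1 ⁻¹' {k : ℕ | ((m1 - 1 : ℕ) : ℝ) * p + t ≤ (k : ℝ)} := rfl
    rw [this]
    exact hN1 (MeasurableSet.of_discrete)
  have hB_meas : MeasurableSet B := by
    have : B = N2 ⁻¹' {k : ℕ | (k : ℝ) ≤ (m2 : ℝ) * q - t} := rfl
    rw [this]
    exact hN2 (MeasurableSet.of_discrete)
  -- final chain
  have hAB : μ (A ∪ B) ≤ ENNReal.ofReal (2 * E) := by
    refine (measure_union_le A B).trans ?_
    calc μ A + μ B ≤ ENNReal.ofReal E + ENNReal.ofReal E := add_le_add hμA hμB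
      _ = ENNReal.ofReal (2 * E) := by
          rw [← ENNReal.ofReal_add hE0.le hE0.le]; norm_num [two_mul]
  calc ENNReal.ofReal (1 - 2 * E)
      ≤ 1 - ENNReal.ofReal (2 * E) := by
        rcases le_total (2 * E) 1 with h | h
        · have hadd : ENNReal.ofReal (1 - 2*E) + ENNReal.ofReal (2*E) = 1 := by
            rw [← ENNReal.ofReal_add (by linarith) (by linarith)]
            norm_num
          exact ENNReal.le_sub_of_add_le_right ENNReal.ofReal_ne_top hadd.le
        · rw [ENNReal.ofReal_of_nonpos (by linarith)]
          exact zero_le'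
    _ ≤ 1 - μ (A ∪ B) := tsub_le_tsub_left hAB 1
    _ = μ ((A ∪ B)ᶜ) := by
        rw [measure_compl (hA_meas.union hB_meas) (measure_ne_top μ _), measure_univ]
    _ ≤ μ T := measure_mono hsub
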